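/- There exists a constant c(q) > 0, depending only on a, b, q and φ, such that for every real number λ ≥ q one has sup_{f ∈ S_α} ρ_f(q^{j₀(λ,q)+1}) / T_f(λ) ≤ c(q) λ^{−a} and sup_{f ∈ S_α} ρ_f(q^{j₀(λ,q)−1}) / T_f(λ) ≤ c(q) λ^{−a}. -/

import Mathlib

open MeasureTheory

/-- C(γ) = 2/π if γ = 1 and (1−γ)/(Γ(2−γ)cos(πγ/2)) otherwise. -/
noncomputable def Cfun (γ : ℝ) : ℝ :=
  if γ = 1 then 2 / Real.pi
  else (1 - γ) / (Real.Gamma (2 - γ) * Real.cos (Real.pi * γ / 2))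

/-- T_f(λ) = ∫_ℝ |λ⁻¹ f(x)|^{α(x)} C(α(x)) dx. -/
noncomputable def Tf (α f : ℝ → ℝ) (lam : ℝ) : ℝ :=
  ∫ x : ℝ, |lam⁻¹ * f x| ^ α x * Cfun (α x)

/-- Membership in the unit sphere S_α of F_α: f is measurable, |f|^{α(·)} is integrable,
and ‖f‖_α = 1, i.e. ∫_ℝ |f(x)|^{α(x)} dx = 1. -/
def MemSα (α f : ℝ → ℝ) : Prop :=
  Measurable f ∧ Integrable (fun x => |f x| ^ α x) ∧ (∫ x : ℝ, |f x| ^ α x) = 1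

/-- ρ_f(ξ) = ∫_ℝ |φ(θ)| · |∫ |ξ⁻¹θ f(x)|^{α(x)} dx − 1 + exp(−∫ |ξ⁻¹θ f(x)|^{α(x)} dx)| dθ. -/
noncomputable def rhoF (α f φ : ℝ → ℝ) (ξ : ℝ) : ℝ :=
  ∫ θ : ℝ, |φ θ| *
    |(∫ x : ℝ, |ξ⁻¹ * θ * f x| ^ α x) - 1 +
      Real.exp (-∫ x : ℝ, |ξ⁻¹ * θ * f x| ^ α x)|

/-- j₀(λ,q) = ⌊log λ / log q⌋. -/
noncomputable def j0 (lam q : ℝ) : ℤ :=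
  ⌊Real.log lam / Real.log q⌋

lemma aux_exp {u : ℝ} (hu : 0 ≤ u) : |u - 1 + Real.exp (-u)| ≤ u ^ 2 := by
  rcases le_or_gt u 1 with h | h
  · have h1 : |(-u : ℝ)| ≤ 1 := by rw [abs_neg, abs_of_nonneg hu]; exact h
    have h2 := Real.abs_exp_sub_one_sub_id_le h1
    have h3 : Real.exp (-u) - 1 - (-u) = u - 1 + Real.exp (-u) := by ring
    rw [h3] at h2
    simpa using h2
  · have h1 := Real.add_one_le_exp (-u)
    have h2 : Real.exp (-u) ≤ 1 := Real.exp_le_one_iff.2 (by linarith)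
    rw [abs_of_nonneg (by linarith)]
    nlinarith

lemma aux_sin_ratio {u : ℝ} (h0 : 0 < u) (h1 : u < 1) :
    2 / Real.pi ≤ u / Real.sin (Real.pi * u / 2) ∧
      u / Real.sin (Real.pi * u / 2) ≤ 1 := by
  have hπ := Real.pi_pos
  set t := Real.pi * u / 2 with ht
  have ht0 : 0 < t := by positivity
  have htle : t ≤ Real.pi / 2 := by rw [ht]; nlinarith
  have hsinpos : 0 < Real.sin t :=
    Real.sin_pos_of_pos_of_lt_pi ht0 (by linarith)
  constructor
  · have hs : Real.sin t ≤ t := (Real.sin_lt ht0).le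
    calc 2 / Real.pi = u / t := by rw [ht]; field_simp
    _ ≤ u / Real.sin t := by
        apply div_le_div_of_nonneg_left h0.le hsinpos hs
  · rw [div_le_one hsinpos]
    have := Real.mul_le_sin ht0.le htle
    calc u = 2 / Real.pi * t := by rw [ht]; field_simp
    _ ≤ Real.sin t := this

lemma aux_ratio {γ : ℝ} (h0 : 0 < γ) (h2 : γ < 2) (h1 : γ ≠ 1) :
    2 / Real.pi ≤ (1 - γ) / Real.cos (Real.pi * γ / 2) ∧
      (1 - γ) / Real.cos (Real.pi * γ / 2) ≤ 1 := by
  have hcos : Real.cos (Real.pi * γ / 2) = Real.sin (Real.pi * (1 - γ) / 2) := by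
    rw [show Real.pi * γ / 2 = Real.pi / 2 - Real.pi * (1 - γ) / 2 by ring,
      Real.cos_pi_div_two_sub]
  rw [hcos]
  rcases lt_or_gt_of_ne h1 with h | h
  · exact aux_sin_ratio (by linarith) (by linarith)
  · have hs : Real.pi * (1 - γ) / 2 = -(Real.pi * (γ - 1) / 2) := by ring
    have : (1 - γ) / Real.sin (Real.pi * (1 - γ) / 2)
        = (γ - 1) / Real.sin (Real.pi * (γ - 1) / 2) := by
      rw [hs, Real.sin_neg, div_neg, show (1 - γ : ℝ) = -(γ - 1) by ring, neg_div, neg_neg]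
    rw [this]
    exact aux_sin_ratio (by linarith) (by linarith)

lemma Cfun_bounds (a b : ℝ) (ha : 0 < a) (hab : a < b) (hb : b < 2) :
    ∃ cmin cmax : ℝ, 0 < cmin ∧ 0 < cmax ∧
      ∀ γ ∈ Set.Icc a b, cmin ≤ Cfun γ ∧ Cfun γ ≤ cmax := by
  have hK : IsCompact (Set.Icc (2 - b) (2 - a)) := isCompact_Icc
  have hne : (Set.Icc (2 - b) (2 - a)).Nonempty := Set.nonempty_Icc.2 (by linarith)
  have hcont : ContinuousOn Real.Gamma (Set.Icc (2 - b) (2 - a)) := by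
    intro s hs
    have hs0 : 0 < s := by have := hs.1; linarith
    exact (Real.differentiableAt_Gamma
      (fun m => ((neg_nonpos.mpr (Nat.cast_nonneg m)).trans_lt hs0).ne')).continuousAt.continuousWithinAt
  obtain ⟨s₁, hs₁K, hmin⟩ := hK.exists_isMinOn hne hcont
  obtain ⟨s₂, hs₂K, hmax⟩ := hK.exists_isMaxOn hne hcont
  have hs₁0 : 0 < s₁ := by have := hs₁K.1; linarith
  have hm : 0 < Real.Gamma s₁ := Real.Gamma_pos_of_pos hs₁0
  have hM : 0 < Real.Gamma s₂ := Real.Gamma_pos_of_pos (by have := hs₂K.1; linarith)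
  have hπ := Real.pi_pos
  refine ⟨min (2 / Real.pi) ((2 / Real.pi) / Real.Gamma s₂),
    max (2 / Real.pi) (1 / Real.Gamma s₁), by positivity, by positivity, ?_⟩
  intro γ hγ
  by_cases h1 : γ = 1
  · subst h1
    simp only [Cfun, if_pos rfl]
    exact ⟨min_le_left _ _, le_max_left _ _⟩
  · have hγ0 : 0 < γ := lt_of_lt_of_le ha hγ.1
    have hγ2 : γ < 2 := lt_of_le_of_lt hγ.2 hb
    obtain ⟨hr1, hr2⟩ := aux_ratio hγ0 hγ2 h1
    have hmem : 2 - γ ∈ Set.Icc (2 - b) (2 - a) := by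
      constructor <;> [linarith [hγ.2]; linarith [hγ.1]]
    have hΓpos : 0 < Real.Gamma (2 - γ) := Real.Gamma_pos_of_pos (by linarith)
    have hΓlb : Real.Gamma s₁ ≤ Real.Gamma (2 - γ) := hmin hmem
    have hΓub : Real.Gamma (2 - γ) ≤ Real.Gamma s₂ := hmax hmem
    have hCeq : Cfun γ = ((1 - γ) / Real.cos (Real.pi * γ / 2)) / Real.Gamma (2 - γ) := by
      simp only [Cfun, if_neg h1]
      rw [div_div]
      ring_nf
    rw [hCeq]
    constructor
    · refine le_trans (min_le_right _ _) ?_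
      exact div_le_div₀ (le_trans (by positivity) hr1) hr1 hΓpos hΓub
    · refine le_trans ?_ (le_max_right _ _)
      exact div_le_div₀ (by norm_num) hr2 hm hΓlb

lemma measurable_Cfun_comp {a b : ℝ} (ha : 0 < a) (hb : b < 2) (α : ℝ → ℝ)
    (hαm : Measurable α) (hα : ∀ x, α x ∈ Set.Icc a b) :
    Measurable fun x => Cfun (α x) := by
  have hG : Continuous fun t : ℝ => Real.Gamma (max t (2 - b)) := by
    rw [continuous_iff_continuousAt]
    intro t
    have h1 : 0 < max t (2 - b) :=
      lt_of_lt_of_le (by linarith) (le_max_right _ _)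
    have h2 : ContinuousAt Real.Gamma (max t (2 - b)) :=
      (Real.differentiableAt_Gamma
        (fun m => ((neg_nonpos.mpr (Nat.cast_nonneg m)).trans_lt h1).ne')).continuousAt
    have h3 : ContinuousAt (fun s : ℝ => max s (2 - b)) t :=
      continuousAt_id.max continuousAt_const
    exact ContinuousAt.comp (g := Real.Gamma) (f := fun s : ℝ => max s (2 - b)) h2 h3
  have key : (fun x => Cfun (α x)) = fun x =>
      if α x = 1 then 2 / Real.pi
      else (1 - α x) /
        (Real.Gamma (max (2 - α x) (2 - b)) * Real.cos (Real.pi * α x / 2)) := by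
    funext x
    by_cases h : α x = 1
    · simp [Cfun, h]
    · have h2 : 2 - b ≤ 2 - α x := by have := (hα x).2; linarith
      simp [Cfun, h, max_eq_left h2]
  rw [key]
  refine Measurable.ite ?_ measurable_const ?_
  · exact hαm (measurableSet_singleton 1)
  · refine Measurable.div (measurable_const.sub hαm) ?_
    refine Measurable.mul ?_ ?_
    · exact hG.measurable.comp (measurable_const.sub hαm)
    · exact Real.measurable_cos.comp ((measurable_const.mul hαm).div_const 2)

lemma core_bound
    (a b : ℝ) (ha : 0 < a) (hab : a < b) (hb : b < 2)
    (α : ℝ → ℝ) (hαm : Measurable α) (hα : ∀ x, α x ∈ Set.Icc a b)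
    (q : ℝ) (hq : 1 < q)
    (φ : ℝ → ℝ) (hφm : Measurable φ)
    (hφmom : Integrable (fun θ : ℝ => (1 + |θ|) ^ (2 * b) * |φ θ|)) :
    ∃ c : ℝ, 0 < c ∧ ∀ lam : ℝ, q ≤ lam → ∀ ξ : ℝ, 1 ≤ ξ → lam ≤ q ^ 2 * ξ →
      ∀ f, MemSα α f → rhoF α f φ ξ / Tf α f lam ≤ c * lam ^ (-a) := by
  obtain ⟨cmin, cmax, hcmin, hcmax, hC⟩ := Cfun_bounds a b ha hab hb
  set Mφ : ℝ := ∫ θ : ℝ, (1 + |θ|) ^ (2 * b) * |φ θ| with hMφdef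
  have hMφ : 0 ≤ Mφ := integral_nonneg fun θ => by positivity
  set Q : ℝ := (q ^ 2) ^ b with hQdef
  have hq0 : (0:ℝ) < q := lt_trans one_pos hq
  have hQ0 : 0 < Q := Real.rpow_pos_of_pos (by positivity) _
  refine ⟨(Mφ + 1) * Q ^ 2 / cmin, by positivity, ?_⟩
  intro lam hlam ξ hξ hlq f hf
  obtain ⟨hfm, hfi, hf1⟩ := hf
  have hlam1 : 1 ≤ lam := le_trans hq.le hlam
  have hlam0 : 0 < lam := lt_of_lt_of_le one_pos hlam1
  have hξ0 : 0 < ξ := lt_of_lt_of_le one_pos hξ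
  have hα0 : ∀ x, 0 ≤ α x := fun x => le_trans ha.le (hα x).1
  -- basic facts about scaled integrands
  have gmeas : ∀ t : ℝ, Measurable fun x => |t * f x| ^ α x :=
    fun t => ((measurable_const.mul hfm).abs).pow hαm
  have gnn : ∀ (t : ℝ) (x : ℝ), 0 ≤ |t * f x| ^ α x :=
    fun t x => Real.rpow_nonneg (abs_nonneg _) _
  have fnn : ∀ x : ℝ, 0 ≤ |f x| ^ α x := fun x => Real.rpow_nonneg (abs_nonneg _) _
  have gle : ∀ t : ℝ, |t| ≤ 1 → ∀ x, |t * f x| ^ α x ≤ |f x| ^ α x := by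
    intro t ht x
    apply Real.rpow_le_rpow (abs_nonneg _) ?_ (hα0 x)
    rw [abs_mul]
    nlinarith [abs_nonneg (f x), abs_nonneg t]
  have gint : ∀ t : ℝ, |t| ≤ 1 → Integrable fun x => |t * f x| ^ α x := by
    intro t ht
    refine hfi.mono ((gmeas t).aestronglyMeasurable) (ae_of_all _ fun x => ?_)
    rw [Real.norm_eq_abs, Real.norm_eq_abs, abs_of_nonneg (gnn t x), abs_of_nonneg (fnn x)]
    exact gle t ht x
  have hinvlam : |lam⁻¹| ≤ 1 := by
    rw [abs_of_nonneg (by positivity)]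
    exact inv_le_one_of_one_le₀ hlam1
  have hinvξ : |ξ⁻¹| ≤ 1 := by
    rw [abs_of_nonneg (by positivity)]
    exact inv_le_one_of_one_le₀ hξ
  have gdecomp : ∀ t : ℝ, 0 < t → ∀ x, |t⁻¹ * f x| ^ α x = (t⁻¹) ^ α x * |f x| ^ α x := by
    intro t ht x
    rw [abs_mul, abs_of_nonneg (by positivity : (0:ℝ) ≤ t⁻¹),
      Real.mul_rpow (by positivity) (abs_nonneg _)]
  set Vl : ℝ := ∫ x : ℝ, |lam⁻¹ * f x| ^ α x with hVldef
  set Vξ : ℝ := ∫ x : ℝ, |ξ⁻¹ * f x| ^ α x with hVξdef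
  have hVξnn : 0 ≤ Vξ := integral_nonneg fun x => gnn _ x
  -- (P1) Vl ≤ lam ^ (-a)
  have hlamrw : lam ^ (-a) = (lam⁻¹) ^ a := by
    rw [Real.rpow_neg hlam0.le, ← Real.inv_rpow hlam0.le]
  have hP1 : Vl ≤ lam ^ (-a) := by
    have hpt : ∀ x, |lam⁻¹ * f x| ^ α x ≤ (lam⁻¹) ^ a * |f x| ^ α x := by
      intro x
      rw [gdecomp lam hlam0 x]
      apply mul_le_mul_of_nonneg_right _ (fnn x)
      exact Real.rpow_le_rpow_of_exponent_ge (by positivity) (inv_le_one_of_one_le₀ hlam1) (hα x).1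
    calc Vl ≤ ∫ x : ℝ, (lam⁻¹) ^ a * |f x| ^ α x :=
      integral_mono (gint _ hinvlam) (hfi.const_mul _) hpt
    _ = (lam⁻¹) ^ a * ∫ x : ℝ, |f x| ^ α x := integral_const_mul _ _
    _ = lam ^ (-a) := by rw [hf1, mul_one, hlamrw]
  -- (P2) 0 < Vl
  have hP2 : 0 < Vl := by
    have hpt : ∀ x, (lam⁻¹) ^ b * |f x| ^ α x ≤ |lam⁻¹ * f x| ^ α x := by
      intro x
      rw [gdecomp lam hlam0 x]
      apply mul_le_mul_of_nonneg_right _ (fnn x)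
      exact Real.rpow_le_rpow_of_exponent_ge (by positivity) (inv_le_one_of_one_le₀ hlam1) (hα x).2
    have : (lam⁻¹) ^ b * 1 ≤ Vl := by
      rw [← hf1, ← integral_const_mul]
      exact integral_mono (hfi.const_mul _) (gint _ hinvlam) hpt
    have hpos : (0:ℝ) < (lam⁻¹) ^ b := Real.rpow_pos_of_pos (by positivity) _
    linarith
  -- (P3) Vξ ≤ Q * Vl
  have hP3 : Vξ ≤ Q * Vl := by
    have hinv : ξ⁻¹ ≤ q ^ 2 * lam⁻¹ := by
      rw [inv_eq_one_div, inv_eq_one_div, mul_one_div, div_le_div_iff₀ hξ0 hlam0]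
      linarith
    have hpt : ∀ x, |ξ⁻¹ * f x| ^ α x ≤ Q * |lam⁻¹ * f x| ^ α x := by
      intro x
      rw [gdecomp ξ hξ0 x, gdecomp lam hlam0 x, ← mul_assoc]
      apply mul_le_mul_of_nonneg_right _ (fnn x)
      calc (ξ⁻¹) ^ α x ≤ (q ^ 2 * lam⁻¹) ^ α x :=
        Real.rpow_le_rpow (by positivity) hinv (hα0 x)
      _ = (q ^ 2) ^ α x * (lam⁻¹) ^ α x := Real.mul_rpow (by positivity) (by positivity)
      _ ≤ Q * (lam⁻¹) ^ α x := by
          apply mul_le_mul_of_nonneg_right _ (by positivity)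
          exact Real.rpow_le_rpow_of_exponent_le (by nlinarith) (hα x).2
    calc Vξ ≤ ∫ x : ℝ, Q * |lam⁻¹ * f x| ^ α x :=
      integral_mono (gint _ hinvξ) ((gint _ hinvlam).const_mul _) hpt
    _ = Q * Vl := integral_const_mul _ _
  -- (P4) pointwise u bound
  have hu_nn : ∀ θ : ℝ, 0 ≤ ∫ x : ℝ, |ξ⁻¹ * θ * f x| ^ α x :=
    fun θ => integral_nonneg fun x => Real.rpow_nonneg (abs_nonneg _) _
  have hP4 : ∀ θ : ℝ, (∫ x : ℝ, |ξ⁻¹ * θ * f x| ^ α x) ≤ (1 + |θ|) ^ b * Vξ := by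
    intro θ
    have hpt : ∀ x, |ξ⁻¹ * θ * f x| ^ α x ≤ (1 + |θ|) ^ b * (|ξ⁻¹ * f x| ^ α x) := by
      intro x
      have h1 : |ξ⁻¹ * θ * f x| = |θ| * |ξ⁻¹ * f x| := by
        rw [show ξ⁻¹ * θ * f x = θ * (ξ⁻¹ * f x) by ring, abs_mul]
      rw [h1, Real.mul_rpow (abs_nonneg _) (abs_nonneg _)]
      apply mul_le_mul_of_nonneg_right _ (gnn _ x)
      calc |θ| ^ α x ≤ (1 + |θ|) ^ α x :=
        Real.rpow_le_rpow (abs_nonneg _) (by linarith [abs_nonneg θ]) (hα0 x)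
      _ ≤ (1 + |θ|) ^ b :=
        Real.rpow_le_rpow_of_exponent_le (by linarith [abs_nonneg θ]) (hα x).2
    calc (∫ x : ℝ, |ξ⁻¹ * θ * f x| ^ α x)
        ≤ ∫ x : ℝ, (1 + |θ|) ^ b * (|ξ⁻¹ * f x| ^ α x) := by
          refine integral_mono_of_nonneg (ae_of_all _ fun x => ?_)
            ((gint _ hinvξ).const_mul _) (ae_of_all _ hpt)
          exact Real.rpow_nonneg (abs_nonneg _) _
    _ = (1 + |θ|) ^ b * Vξ := integral_const_mul _ _
  -- rho bound
  have hρ : rhoF α f φ ξ ≤ Mφ * Vξ ^ 2 := by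
    have hpt : ∀ θ : ℝ, |φ θ| *
        |(∫ x : ℝ, |ξ⁻¹ * θ * f x| ^ α x) - 1 +
          Real.exp (-∫ x : ℝ, |ξ⁻¹ * θ * f x| ^ α x)|
        ≤ ((1 + |θ|) ^ (2 * b) * |φ θ|) * Vξ ^ 2 := by
      intro θ
      set u : ℝ := ∫ x : ℝ, |ξ⁻¹ * θ * f x| ^ α x with hudef
      have h1 : |u - 1 + Real.exp (-u)| ≤ u ^ 2 := aux_exp (hu_nn θ)
      have h2 : u ^ 2 ≤ ((1 + |θ|) ^ b * Vξ) ^ 2 :=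
        pow_le_pow_left₀ (hu_nn θ) (hP4 θ) 2
      have h3 : ((1 + |θ|) ^ b * Vξ) ^ 2 = (1 + |θ|) ^ (2 * b) * Vξ ^ 2 := by
        rw [mul_pow]
        congr 1
        rw [← Real.rpow_natCast ((1 + |θ|) ^ b) 2, ← Real.rpow_mul (by positivity)]
        norm_num [mul_comm]
      have h4 : |u - 1 + Real.exp (-u)| ≤ (1 + |θ|) ^ (2 * b) * Vξ ^ 2 := by
        rw [← h3]; exact le_trans h1 h2
      have h5 : |φ θ| * |u - 1 + Real.exp (-u)|
          ≤ |φ θ| * ((1 + |θ|) ^ (2 * b) * Vξ ^ 2) :=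
        mul_le_mul_of_nonneg_left h4 (abs_nonneg _)
      calc |φ θ| * |u - 1 + Real.exp (-u)|
          ≤ |φ θ| * ((1 + |θ|) ^ (2 * b) * Vξ ^ 2) := h5
        _ = ((1 + |θ|) ^ (2 * b) * |φ θ|) * Vξ ^ 2 := by ring
    have h6 : rhoF α f φ ξ ≤ ∫ θ : ℝ, ((1 + |θ|) ^ (2 * b) * |φ θ|) * Vξ ^ 2 :=
      integral_mono_of_nonneg (ae_of_all _ fun θ => by positivity)
        (hφmom.mul_const _) (ae_of_all _ hpt)
    rw [integral_mul_const] at h6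
    exact h6
  -- Tf lower bound
  have hCm : Measurable fun x => Cfun (α x) := measurable_Cfun_comp ha hb α hαm hα
  have hTint : Integrable fun x => |lam⁻¹ * f x| ^ α x * Cfun (α x) := by
    refine Integrable.mono ((gint _ hinvlam).mul_const cmax)
      (((gmeas _).mul hCm).aestronglyMeasurable) (ae_of_all _ fun x => ?_)
    rw [Real.norm_eq_abs, Real.norm_eq_abs]
    have h1 := (hC (α x) (hα x)).1
    have h2 := (hC (α x) (hα x)).2
    have h3 := gnn lam⁻¹ x
    rw [abs_of_nonneg (mul_nonneg h3 (le_trans hcmin.le h1)),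
      abs_of_nonneg (mul_nonneg h3 hcmax.le)]
    exact mul_le_mul_of_nonneg_left h2 h3
  have hTlb : cmin * Vl ≤ Tf α f lam := by
    have hpt : ∀ x, cmin * (|lam⁻¹ * f x| ^ α x) ≤ |lam⁻¹ * f x| ^ α x * Cfun (α x) := by
      intro x
      rw [mul_comm]
      exact mul_le_mul_of_nonneg_left (hC (α x) (hα x)).1 (gnn _ x)
    calc cmin * Vl = ∫ x : ℝ, cmin * (|lam⁻¹ * f x| ^ α x) := (integral_const_mul _ _).symm
    _ ≤ Tf α f lam := integral_mono ((gint _ hinvlam).const_mul _) hTint hpt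
  have hT0 : 0 < Tf α f lam := lt_of_lt_of_le (by positivity) hTlb
  -- conclude
  rw [div_le_iff₀ hT0]
  have hla : (0:ℝ) < lam ^ (-a) := Real.rpow_pos_of_pos hlam0 _
  have s1 : Mφ * Vξ ^ 2 ≤ Mφ * (Q * Vl) ^ 2 :=
    mul_le_mul_of_nonneg_left (pow_le_pow_left₀ hVξnn hP3 2) hMφ
  have s2 : Vl * Vl ≤ lam ^ (-a) * Vl := mul_le_mul_of_nonneg_right hP1 hP2.le
  have s3 : Mφ * (Q * Vl) ^ 2 ≤ (Mφ + 1) * Q ^ 2 * (lam ^ (-a) * Vl) := by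
    have h2 : (0:ℝ) ≤ lam ^ (-a) * Vl := by positivity
    have k1 : Mφ * Q ^ 2 * (Vl * Vl) ≤ Mφ * Q ^ 2 * (lam ^ (-a) * Vl) :=
      mul_le_mul_of_nonneg_left s2 (mul_nonneg hMφ (sq_nonneg Q))
    have k2 : Mφ * Q ^ 2 * (lam ^ (-a) * Vl) ≤ (Mφ + 1) * Q ^ 2 * (lam ^ (-a) * Vl) :=
      mul_le_mul_of_nonneg_right (by nlinarith [sq_nonneg Q]) h2
    calc Mφ * (Q * Vl) ^ 2 = Mφ * Q ^ 2 * (Vl * Vl) := by ring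
      _ ≤ Mφ * Q ^ 2 * (lam ^ (-a) * Vl) := k1
      _ ≤ (Mφ + 1) * Q ^ 2 * (lam ^ (-a) * Vl) := k2
  have s4 : (Mφ + 1) * Q ^ 2 * (lam ^ (-a) * Vl)
      = ((Mφ + 1) * Q ^ 2 * lam ^ (-a) / cmin) * (cmin * Vl) := by
    field_simp
  have s5 : ((Mφ + 1) * Q ^ 2 * lam ^ (-a) / cmin) * (cmin * Vl)
      ≤ ((Mφ + 1) * Q ^ 2 * lam ^ (-a) / cmin) * Tf α f lam :=
    mul_le_mul_of_nonneg_left hTlb (by positivity)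
  have s6 : ((Mφ + 1) * Q ^ 2 * lam ^ (-a) / cmin) * Tf α f lam
      = (Mφ + 1) * Q ^ 2 / cmin * lam ^ (-a) * Tf α f lam := by ring
  linarith [hρ]

/-- there is a constant c(q) > 0 such that for all λ ≥ q,
sup_{f∈S_α} ρ_f(q^{j₀(λ,q)+1})/T_f(λ) ≤ c(q) λ^{−a} and
sup_{f∈S_α} ρ_f(q^{j₀(λ,q)−1})/T_f(λ) ≤ c(q) λ^{−a}. -/
theorem rho_ratio_bound
    (a b : ℝ) (ha : 0 < a) (hab : a < b) (hb : b < 2)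
    (α : ℝ → ℝ) (hαm : Measurable α) (hα : ∀ x, α x ∈ Set.Icc a b)
    (q : ℝ) (hq : 1 < q)
    (φ : ℝ → ℝ) (hφm : Measurable φ)
    (hφmom : Integrable (fun θ : ℝ => (1 + |θ|) ^ (2 * b) * |φ θ|)) :
    ∃ c : ℝ, 0 < c ∧ ∀ lam : ℝ, q ≤ lam → ∀ f, MemSα α f →
      rhoF α f φ (q ^ (j0 lam q + 1)) / Tf α f lam ≤ c * lam ^ (-a) ∧
      rhoF α f φ (q ^ (j0 lam q - 1)) / Tf α f lam ≤ c * lam ^ (-a) := by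
  obtain ⟨c, hc, hcore⟩ := core_bound a b ha hab hb α hαm hα q hq φ hφm hφmom
  refine ⟨c, hc, fun lam hlam f hf => ?_⟩
  have hq0 : (0:ℝ) < q := lt_trans one_pos hq
  have hq1 : (1:ℝ) ≤ q := hq.le
  have hlam0 : (0:ℝ) < lam := lt_of_lt_of_le hq0 hlam
  have hlogq : 0 < Real.log q := Real.log_pos hq
  set j : ℤ := j0 lam q with hjdef
  -- j ≥ 1
  have hj1 : 1 ≤ j := by
    rw [hjdef, j0]
    apply Int.le_floor.2
    rw [Int.cast_one, le_div_iff₀ hlogq, one_mul]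
    exact Real.log_le_log hq0 hlam
  -- lam ≤ q ^ (j+1)
  have hkey : lam ≤ q ^ (j + 1) := by
    have h2 : Real.log lam / Real.log q < (j : ℝ) + 1 := by
      rw [hjdef, j0]
      push_cast
      exact Int.lt_floor_add_one _
    have h3 : Real.log lam ≤ ((j : ℝ) + 1) * Real.log q := by
      rw [div_lt_iff₀ hlogq] at h2
      linarith
    have h4 : lam ≤ Real.exp (((j : ℝ) + 1) * Real.log q) := by
      calc lam = Real.exp (Real.log lam) := (Real.exp_log hlam0).symm
        _ ≤ _ := Real.exp_le_exp.2 h3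
    have h5 : Real.exp (((j : ℝ) + 1) * Real.log q) = q ^ (j + 1) := by
      rw [show ((j : ℝ) + 1) = ((j + 1 : ℤ) : ℝ) by push_cast; ring,
        ← Real.rpow_intCast q (j + 1), Real.rpow_def_of_pos hq0, mul_comm]
    rw [← h5]
    exact h4
  have hξ1 : (1:ℝ) ≤ q ^ (j + 1) := le_trans (le_trans hq1 hlam) hkey
  have hξ1' : (1:ℝ) ≤ q ^ (j - 1) := one_le_zpow₀ hq1 (by omega)
  have hq2 : (1:ℝ) ≤ q ^ 2 := one_le_pow₀ hq1
  have hcond1 : lam ≤ q ^ 2 * q ^ (j + 1) := by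
    calc lam ≤ q ^ (j + 1) := hkey
      _ ≤ q ^ 2 * q ^ (j + 1) := le_mul_of_one_le_left (by positivity) hq2
  have hcond2 : lam ≤ q ^ 2 * q ^ (j - 1) := by
    have : q ^ 2 * q ^ (j - 1) = q ^ (j + 1) := by
      rw [show (q:ℝ) ^ 2 = q ^ (2:ℤ) by exact_mod_cast (zpow_natCast q 2).symm, ← zpow_add₀ (ne_of_gt hq0)]
      congr 1
      omega
    rw [this]
    exact hkey
  exact ⟨hcore lam hlam _ hξ1 hcond1 f hf, hcore lam hlam _ hξ1' hcond2 f hf⟩
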